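/- arXiv:2004.01122 — 2 statements merged into one kernel-verified Lean document; each statement's English description precedes it below -/
import Mathlib

section
/- Automatic differentiation of a parameterized quantum circuit (soundness of the code transformation for straight-line unitary programs): let σ₁, …, σ_k be Hermitian involutory n×n complex matrices (σᵢᴴ = σᵢ, σᵢ·σᵢ = 1ₙ), let θ ∈ ℝ^k, let W(θ) := R_{σ_k}(θ_k) · ⋯ · R_{σ_1}(θ_1), and for j ∈ {1,…,k} set A_j := R_{σ_{j−1}}(θ_{j−1}) · ⋯ · R_{σ_1}(θ_1) (with A_1 = 1ₙ) and B_j := R_{σ_k}(θ_k) · ⋯ · R_{σ_{j+1}}(θ_{j+1}) (with B_k = 1ₙ). Then for every n×n complex matrices O and ρ and every j, the j-th partial derivative of the ℂ-valued function θ ↦ trace(O · W(θ) · ρ · (W(θ))ᴴ) at θ equals trace((Z_A ⊗ O) · G_j · (e00 ⊗ ρ) · G_jᴴ), where G_j := (1₂ ⊗ B_j) · R′_{σ_j}(θ_j) · (1₂ ⊗ A_j). -/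
open Matrix Kronecker Complex

/-- The parameterized rotation gate `R_σ(θ) = cos(θ/2) • 1 − (i·sin(θ/2)) • σ`. -/
noncomputable def Rgate {n : ℕ} (σ : Matrix (Fin n) (Fin n) ℂ) (θ : ℝ) :
    Matrix (Fin n) (Fin n) ℂ :=
  (Real.cos (θ / 2) : ℂ) • (1 : Matrix (Fin n) (Fin n) ℂ)
    - (Complex.I * (Real.sin (θ / 2) : ℂ)) • σ

/-- `|0⟩⟨0|`. -/
def e00 : Matrix (Fin 2) (Fin 2) ℂ := !![1, 0; 0, 0]

/-- `|1⟩⟨1|`. -/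
def e11 : Matrix (Fin 2) (Fin 2) ℂ := !![0, 0; 0, 1]

/-- The Hadamard matrix. -/
noncomputable def Hmat : Matrix (Fin 2) (Fin 2) ℂ :=
  ((1 / Real.sqrt 2 : ℝ) : ℂ) • !![1, 1; 1, -1]

/-- The Pauli-Z ancilla observable. -/
def ZA : Matrix (Fin 2) (Fin 2) ℂ := !![1, 0; 0, -1]

/-- The controlled rotation `C_Rσ(θ) = |0⟩⟨0| ⊗ R_σ(θ) + |1⟩⟨1| ⊗ R_σ(θ+π)`. -/
noncomputable def CR {n : ℕ} (σ : Matrix (Fin n) (Fin n) ℂ) (θ : ℝ) :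
    Matrix (Fin 2 × Fin n) (Fin 2 × Fin n) ℂ :=
  e00 ⊗ₖ Rgate σ θ + e11 ⊗ₖ Rgate σ (θ + Real.pi)

/-- The differentiation gadget `R′_σ(θ) = (H ⊗ 1) C_Rσ(θ) (H ⊗ 1)`. -/
noncomputable def Rgadget {n : ℕ} (σ : Matrix (Fin n) (Fin n) ℂ) (θ : ℝ) :
    Matrix (Fin 2 × Fin n) (Fin 2 × Fin n) ℂ :=
  (Hmat ⊗ₖ (1 : Matrix (Fin n) (Fin n) ℂ)) * CR σ θ
    * (Hmat ⊗ₖ (1 : Matrix (Fin n) (Fin n) ℂ))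

/- ### Auxiliary lemmas -/

lemma traceExpand {n : ℕ} (O ρ M₁ M₂ : Matrix (Fin n) (Fin n) ℂ) (z w z' w' : ℂ) :
    (O * (z•M₁ + w•M₂) * ρ * (z'•M₁ᴴ + w'•M₂ᴴ)).trace =
      z*z'*(O*M₁*ρ*M₁ᴴ).trace + z*w'*(O*M₁*ρ*M₂ᴴ).trace
        + w*z'*(O*M₂*ρ*M₁ᴴ).trace + w*w'*(O*M₂*ρ*M₂ᴴ).trace := by
  simp only [Matrix.mul_add, Matrix.add_mul, Matrix.mul_smul, Matrix.smul_mul,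
    Matrix.trace_add, Matrix.trace_smul, smul_smul, smul_eq_mul]
  ring

lemma smulCT {n : ℕ} (z w : ℂ) (M₁ M₂ : Matrix (Fin n) (Fin n) ℂ) :
    (z•M₁+w•M₂)ᴴ = star z • M₁ᴴ + star w • M₂ᴴ := by
  simp [Matrix.conjTranspose_add, Matrix.conjTranspose_smul]

lemma kronCT {l m p q : Type*} (A : Matrix l m ℂ) (B : Matrix p q ℂ) :
    (A ⊗ₖ B)ᴴ = Aᴴ ⊗ₖ Bᴴ := by
  ext ⟨i,j⟩ ⟨i',j'⟩
  simp [Matrix.conjTranspose_apply, Matrix.kroneckerMap_apply, mul_comm]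

lemma hhalf : ((1 / Real.sqrt 2 : ℝ) : ℂ) * ((1 / Real.sqrt 2 : ℝ) : ℂ) = 1/2 := by
  rw [← Complex.ofReal_mul, div_mul_div_comm, Real.mul_self_sqrt (by norm_num)]
  norm_num

lemma hF0 : Hmat * e00 * Hmat = (1/2 : ℂ) • !![1,1;1,1] := by
  rw [Hmat, e00, Matrix.smul_mul, Matrix.mul_smul, Matrix.smul_mul, smul_smul, hhalf,
    Matrix.mul_fin_two, Matrix.mul_fin_two]
  norm_num

lemma hF1 : Hmat * e11 * Hmat = (1/2 : ℂ) • !![1,-1;-1,1] := by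
  rw [Hmat, e11, Matrix.smul_mul, Matrix.mul_smul, Matrix.smul_mul, smul_smul, hhalf,
    Matrix.mul_fin_two, Matrix.mul_fin_two]
  norm_num

lemma hF0H : ((1/2 : ℂ) • !![1,1;1,1] : Matrix (Fin 2) (Fin 2) ℂ)ᴴ
    = (1/2 : ℂ) • !![1,1;1,1] := by
  ext i j; fin_cases i <;> fin_cases j <;> simp [Matrix.conjTranspose_apply]

lemma hF1H : ((1/2 : ℂ) • !![1,-1;-1,1] : Matrix (Fin 2) (Fin 2) ℂ)ᴴ
    = (1/2 : ℂ) • !![1,-1;-1,1] := by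
  ext i j; fin_cases i <;> fin_cases j <;> simp [Matrix.conjTranspose_apply]

lemma tr00 : (ZA * ((1/2 : ℂ) • !![1,1;1,1]) * e00 * ((1/2 : ℂ) • !![1,1;1,1])).trace = 0 := by
  simp [ZA, e00, Matrix.mul_smul, Matrix.smul_mul, Matrix.mul_fin_two,
    Matrix.trace_fin_two, smul_smul]

lemma tr01 : (ZA * ((1/2 : ℂ) • !![1,1;1,1]) * e00 * ((1/2 : ℂ) • !![1,-1;-1,1])).trace
    = 1/2 := by
  simp [ZA, e00, Matrix.mul_smul, Matrix.smul_mul, Matrix.mul_fin_two,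
    Matrix.trace_fin_two, smul_smul]
  norm_num [Matrix.smul_apply]

lemma tr10 : (ZA * ((1/2 : ℂ) • !![1,-1;-1,1]) * e00 * ((1/2 : ℂ) • !![1,1;1,1])).trace
    = 1/2 := by
  simp [ZA, e00, Matrix.mul_smul, Matrix.smul_mul, Matrix.mul_fin_two,
    Matrix.trace_fin_two, smul_smul]
  norm_num [Matrix.smul_apply]

lemma tr11 : (ZA * ((1/2 : ℂ) • !![1,-1;-1,1]) * e00 * ((1/2 : ℂ) • !![1,-1;-1,1])).trace
    = 0 := by
  simp [ZA, e00, Matrix.mul_smul, Matrix.smul_mul, Matrix.mul_fin_two,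
    Matrix.trace_fin_two, smul_smul]

lemma Rgate_decomp {n : ℕ} (σ₀ A B : Matrix (Fin n) (Fin n) ℂ) (x : ℝ) :
    B * Rgate σ₀ x * A = (Real.cos (x/2) : ℂ) • (B * A)
      + (-(Complex.I * (Real.sin (x/2) : ℂ))) • (B * σ₀ * A) := by
  rw [Rgate]
  simp only [Matrix.mul_sub, Matrix.sub_mul, Matrix.mul_smul, Matrix.smul_mul,
    Matrix.mul_one, sub_eq_add_neg, neg_smul, Matrix.mul_add, Matrix.add_mul,
    Matrix.mul_neg, Matrix.neg_mul, Matrix.mul_assoc]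

lemma Rgate_pi_decomp {n : ℕ} (σ₀ A B : Matrix (Fin n) (Fin n) ℂ) (x : ℝ) :
    B * Rgate σ₀ (x + Real.pi) * A = (-(Real.sin (x/2) : ℂ)) • (B * A)
      + (-(Complex.I * (Real.cos (x/2) : ℂ))) • (B * σ₀ * A) := by
  rw [Rgate, show (x + Real.pi)/2 = x/2 + Real.pi/2 by ring,
    Real.cos_add_pi_div_two, Real.sin_add_pi_div_two]
  push_cast
  simp only [Matrix.mul_sub, Matrix.sub_mul, Matrix.mul_smul, Matrix.smul_mul,
    Matrix.mul_one, sub_eq_add_neg, neg_smul, Matrix.mul_add, Matrix.add_mul,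
    Matrix.mul_neg, Matrix.neg_mul, Matrix.mul_assoc]

lemma star_ofReal' (r : ℝ) : star ((r:ℝ):ℂ) = ((r:ℝ):ℂ) := by
  rw [Complex.star_def, Complex.conj_ofReal]

lemma star_negI_mul (r : ℝ) : star (-(Complex.I*((r:ℝ):ℂ))) = Complex.I*((r:ℝ):ℂ) := by
  simp only [star_neg, star_mul', Complex.star_def, Complex.conj_ofReal, Complex.conj_I]
  ring

lemma star_neg_ofReal' (r : ℝ) : star (-((r:ℝ):ℂ)) = -((r:ℝ):ℂ) := by
  simp only [star_neg, Complex.star_def, Complex.conj_ofReal]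

/-- Automatic differentiation of a parameterized quantum circuit: soundness of the
code transformation for straight-line unitary programs. -/
theorem circuit_autodiff_sound (n k : ℕ)
    (σ : Fin k → Matrix (Fin n) (Fin n) ℂ)
    (hσH : ∀ i, (σ i)ᴴ = σ i) (hσ2 : ∀ i, σ i * σ i = 1)
    (θ : Fin k → ℝ) (O ρ : Matrix (Fin n) (Fin n) ℂ) (j : Fin k)
    (W : (Fin k → ℝ) → Matrix (Fin n) (Fin n) ℂ)
    (hW : ∀ t : Fin k → ℝ, W t = (List.ofFn fun i => Rgate (σ i) (t i)).reverse.prod)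
    (A B : Matrix (Fin n) (Fin n) ℂ)
    (hA : A = ((List.ofFn fun i => Rgate (σ i) (θ i)).take (j : ℕ)).reverse.prod)
    (hB : B = ((List.ofFn fun i => Rgate (σ i) (θ i)).drop ((j : ℕ) + 1)).reverse.prod)
    (G : Matrix (Fin 2 × Fin n) (Fin 2 × Fin n) ℂ)
    (hG : G = ((1 : Matrix (Fin 2) (Fin 2) ℂ) ⊗ₖ B) * Rgadget (σ j) (θ j)
        * ((1 : Matrix (Fin 2) (Fin 2) ℂ) ⊗ₖ A)) :
    deriv (fun t : ℝ =>
        (O * W (Function.update θ j t) * ρ * (W (Function.update θ j t))ᴴ).trace) (θ j)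
      = ((ZA ⊗ₖ O) * G * (e00 ⊗ₖ ρ) * Gᴴ).trace := by
  -- Step 1: the circuit splits around the j-th gate
  have hsplit : ∀ t, W (Function.update θ j t) = B * Rgate (σ j) t * A := by
    intro t
    rw [hW, hA, hB]
    set g := fun i => Rgate (σ i) (Function.update θ j t i) with hg
    set f := fun i => Rgate (σ i) (θ i) with hf
    have hj : (j:ℕ) < (List.ofFn g).length := by simp [j.isLt]
    have h1 : List.ofFn g
        = (List.ofFn g).take j ++ (List.ofFn g)[(j:ℕ)] :: (List.ofFn g).drop (j+1) := by
      conv_lhs => rw [← List.take_append_drop (j:ℕ) (List.ofFn g)]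
      rw [List.drop_eq_getElem_cons hj]
    have hgj : (List.ofFn g)[(j:ℕ)]'hj = Rgate (σ j) t := by
      simp [List.getElem_ofFn, hg]
    have htake : (List.ofFn g).take j = (List.ofFn f).take j := by
      apply List.ext_getElem (by simp)
      intro i h1i h2i
      have hik : i < k := by simpa using lt_of_lt_of_le h1i (by simp [List.length_take])
      have hlt : i < (j:ℕ) := by
        have := h1i; simp [List.length_take] at this; omega
      have hij : (⟨i, hik⟩ : Fin k) ≠ j := by
        refine Fin.ne_of_val_ne ?_
        simp only [Fin.val_mk]
        omega
      simp [List.getElem_take, List.getElem_ofFn, hg, hf, Function.update_of_ne hij]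
    have hdrop : (List.ofFn g).drop ((j:ℕ)+1) = (List.ofFn f).drop ((j:ℕ)+1) := by
      apply List.ext_getElem (by simp)
      intro i h1i h2i
      have hik : (j:ℕ)+1+i < k := by
        have := h1i; simp [List.length_drop] at this; omega
      have hij : (⟨(j:ℕ)+1+i, hik⟩ : Fin k) ≠ j := by
        refine Fin.ne_of_val_ne ?_; simp only [Fin.val_mk]; omega
      simp [List.getElem_drop, List.getElem_ofFn, hg, hf, Function.update_of_ne hij]
    rw [h1, hgj, htake, hdrop]
    simp [List.reverse_append, List.reverse_cons, List.prod_append, Matrix.mul_assoc]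
  -- abbreviations
  set M₁ := B * A with hM₁
  set M₂ := B * σ j * A with hM₂
  set T11 := (O*M₁*ρ*M₁ᴴ).trace with hT11
  set T12 := (O*M₁*ρ*M₂ᴴ).trace with hT12
  set T21 := (O*M₂*ρ*M₁ᴴ).trace with hT21
  set T22 := (O*M₂*ρ*M₂ᴴ).trace with hT22
  -- Step 2: the LHS function in closed scalar form
  have hfun : (fun t : ℝ =>
        (O * W (Function.update θ j t) * ρ * (W (Function.update θ j t))ᴴ).trace)
      = fun t : ℝ =>
        ((Real.cos (t/2) : ℂ) * (Real.cos (t/2) : ℂ)) * T11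
        + ((Real.cos (t/2) : ℂ) * (Complex.I * (Real.sin (t/2) : ℂ))) * T12
        + ((-(Complex.I * (Real.sin (t/2) : ℂ))) * (Real.cos (t/2) : ℂ)) * T21
        + ((-(Complex.I * (Real.sin (t/2) : ℂ))) * (Complex.I * (Real.sin (t/2) : ℂ))) * T22 := by
    funext t
    rw [hsplit t, Rgate_decomp, smulCT, traceExpand, ← hM₁, ← hM₂,
      ← hT11, ← hT12, ← hT21, ← hT22,
      star_ofReal' (Real.cos (t/2)), star_negI_mul (Real.sin (t/2))]
  rw [hfun]
  -- Step 2': differentiate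
  set x := θ j with hx
  have hc : HasDerivAt (fun t : ℝ => ((Real.cos (t/2) : ℝ) : ℂ))
      (((-Real.sin (x/2) * (1/2) : ℝ) : ℂ)) x := by
    have h := ((Real.hasDerivAt_cos (x/2)).comp x ((hasDerivAt_id x).div_const 2)).ofReal_comp
    exact h
  have hs : HasDerivAt (fun t : ℝ => ((Real.sin (t/2) : ℝ) : ℂ))
      (((Real.cos (x/2) * (1/2) : ℝ) : ℂ)) x := by
    have h := ((Real.hasDerivAt_sin (x/2)).comp x ((hasDerivAt_id x).div_const 2)).ofReal_comp
    exact h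
  have hd := ((((hc.mul hc).mul_const T11).add
      ((hc.mul (hs.const_mul Complex.I)).mul_const T12)).add
      ((((hs.const_mul Complex.I).neg).mul hc).mul_const T21)).add
      ((((hs.const_mul Complex.I).neg).mul (hs.const_mul Complex.I)).mul_const T22)
  erw [hd.deriv]
  -- Step 3: compute the RHS trace
  have hGexp : G = ((1/2 : ℂ) • !![1,1;1,1]) ⊗ₖ (B * Rgate (σ j) x * A)
      + ((1/2 : ℂ) • !![1,-1;-1,1]) ⊗ₖ (B * Rgate (σ j) (x + Real.pi) * A) := by
    rw [hG, Rgadget, CR, ← hF0, ← hF1]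
    simp only [Matrix.mul_add, Matrix.add_mul, ← Matrix.mul_kronecker_mul,
      Matrix.one_mul, Matrix.mul_one]
  rw [hGexp]
  simp only [Matrix.conjTranspose_add, kronCT, hF0H, hF1H, Matrix.mul_add, Matrix.add_mul,
    ← Matrix.mul_kronecker_mul, Matrix.trace_add, Matrix.trace_kronecker, tr00, tr01, tr10, tr11]
  have e1 : (O * (B * Rgate (σ j) x * A) * ρ * (B * Rgate (σ j) (x + Real.pi) * A)ᴴ).trace
      = (Real.cos (x/2) : ℂ) * (-(Real.sin (x/2):ℂ)) * T11
        + (Real.cos (x/2) : ℂ) * (Complex.I * (Real.cos (x/2):ℂ)) * T12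
        + (-(Complex.I * (Real.sin (x/2):ℂ))) * (-(Real.sin (x/2):ℂ)) * T21
        + (-(Complex.I * (Real.sin (x/2):ℂ))) * (Complex.I * (Real.cos (x/2):ℂ)) * T22 := by
    rw [Rgate_decomp, Rgate_pi_decomp, smulCT, traceExpand, ← hM₁, ← hM₂,
      ← hT11, ← hT12, ← hT21, ← hT22,
      star_neg_ofReal' (Real.sin (x/2)), star_negI_mul (Real.cos (x/2))]
  have e2 : (O * (B * Rgate (σ j) (x + Real.pi) * A) * ρ * (B * Rgate (σ j) x * A)ᴴ).trace
      = (-(Real.sin (x/2):ℂ)) * (Real.cos (x/2) : ℂ) * T11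
        + (-(Real.sin (x/2):ℂ)) * (Complex.I * (Real.sin (x/2):ℂ)) * T12
        + (-(Complex.I * (Real.cos (x/2):ℂ))) * (Real.cos (x/2) : ℂ) * T21
        + (-(Complex.I * (Real.cos (x/2):ℂ))) * (Complex.I * (Real.sin (x/2):ℂ)) * T22 := by
    rw [Rgate_pi_decomp, Rgate_decomp, smulCT, traceExpand, ← hM₁, ← hM₂,
      ← hT11, ← hT12, ← hT21, ← hT22,
      star_ofReal' (Real.cos (x/2)), star_negI_mul (Real.sin (x/2))]
  rw [e1, e2]
  push_cast
  simp only [Pi.neg_apply]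
  ring_nf
end

section
/- Soundness of the Case code-transformation rule for unitary branches: let (M_m)_{m ∈ ι} be a finite family of n×n complex matrices (measurement operators) and (σ_m)_{m ∈ ι} a finite family of Hermitian involutory n×n complex matrices (σ_mᴴ = σ_m, σ_m·σ_m = 1ₙ). Then for every n×n complex matrices O and ρ and every θ ∈ ℝ: deriv (fun t : ℝ => Σ_{m ∈ ι} trace(O · R_{σ_m}(t) · M_m · ρ · M_mᴴ · (R_{σ_m}(t))ᴴ)) θ = Σ_{m ∈ ι} trace((Z_A ⊗ O) · R′_{σ_m}(θ) · (e00 ⊗ (M_m · ρ · M_mᴴ)) · (R′_{σ_m}(θ))ᴴ). -/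
open Matrix Kronecker Complex

/-! ### Auxiliary lemmas -/

lemma Rgate_conjT {n : ℕ} {σ : Matrix (Fin n) (Fin n) ℂ} (hH : σᴴ = σ) (t : ℝ) :
    (Rgate σ t)ᴴ = (Real.cos (t / 2) : ℂ) • (1 : Matrix (Fin n) (Fin n) ℂ)
      + (Complex.I * (Real.sin (t / 2) : ℂ)) • σ := by
  simp only [Rgate, conjTranspose_sub, conjTranspose_smul, conjTranspose_one, hH, star_mul',
    Complex.star_def, _root_.map_mul,
    Complex.conj_I, Complex.conj_ofReal, neg_mul, neg_smul, sub_neg_eq_add]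

lemma trace_aux {n : ℕ} {σ : Matrix (Fin n) (Fin n) ℂ} (hH : σᴴ = σ)
    (O ρ' : Matrix (Fin n) (Fin n) ℂ) (s t : ℝ) :
    (O * Rgate σ s * ρ' * (Rgate σ t)ᴴ).trace =
      (Real.cos (s / 2) : ℂ) * (Real.cos (t / 2) : ℂ) * (O * ρ').trace
      + Complex.I * (Real.cos (s / 2) : ℂ) * (Real.sin (t / 2) : ℂ) * (O * ρ' * σ).trace
      - Complex.I * (Real.sin (s / 2) : ℂ) * (Real.cos (t / 2) : ℂ) * (O * σ * ρ').trace
      + (Real.sin (s / 2) : ℂ) * (Real.sin (t / 2) : ℂ) * (O * σ * ρ' * σ).trace := by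
  rw [Rgate_conjT hH]
  simp only [Rgate, Matrix.mul_sub, Matrix.sub_mul, Matrix.mul_add, Matrix.add_mul,
    Matrix.mul_smul, Matrix.smul_mul, Matrix.mul_one, Matrix.one_mul, smul_smul,
    trace_add, trace_sub, trace_smul, smul_eq_mul, Matrix.mul_assoc]
  ring_nf
  simp [Matrix.mul_assoc]

def Jm : Matrix (Fin 2) (Fin 2) ℂ := !![1, 1; 1, 1]
def Km : Matrix (Fin 2) (Fin 2) ℂ := !![1, -1; -1, 1]

lemma kron_conjT {n : ℕ} (A : Matrix (Fin 2) (Fin 2) ℂ) (B : Matrix (Fin n) (Fin n) ℂ) :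
    (A ⊗ₖ B)ᴴ = Aᴴ ⊗ₖ Bᴴ := by
  ext i j
  simp [conjTranspose_apply, kroneckerMap_apply, mul_comm]

lemma Hmat_mul_self : ∀ X : Matrix (Fin 2) (Fin 2) ℂ,
    Hmat * X * Hmat = ((1/2 : ℂ)) • (!![1, 1; 1, -1] * X * !![1, 1; 1, -1]) := by
  intro X
  have h2 : ((1 / Real.sqrt 2 : ℝ) : ℂ) * ((1 / Real.sqrt 2 : ℝ) : ℂ) = 1/2 := by
    rw [← Complex.ofReal_mul, div_mul_div_comm, one_mul,
      Real.mul_self_sqrt (by norm_num : (0:ℝ) ≤ 2)]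
    norm_num
  simp only [Hmat, Matrix.smul_mul, Matrix.mul_smul, smul_smul, h2]

lemma gadget_eq {n : ℕ} (σ : Matrix (Fin n) (Fin n) ℂ) (θ : ℝ) :
    Rgadget σ θ = ((1/2 : ℂ) • Jm) ⊗ₖ Rgate σ θ
      + ((1/2 : ℂ) • Km) ⊗ₖ Rgate σ (θ + Real.pi) := by
  rw [Rgadget, CR, Matrix.mul_add, Matrix.add_mul, ← mul_kronecker_mul, ← mul_kronecker_mul,
    ← mul_kronecker_mul, ← mul_kronecker_mul, Matrix.one_mul, Matrix.mul_one,
    Matrix.one_mul, Matrix.mul_one, Hmat_mul_self, Hmat_mul_self]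
  congr 2
  · norm_num [e00, Jm, Matrix.mul_fin_two]
  · norm_num [e11, Km, Matrix.mul_fin_two]

lemma Jm_conjT : Jmᴴ = Jm := by
  ext i j
  fin_cases i <;> fin_cases j <;> simp [Jm]

lemma Km_conjT : Kmᴴ = Km := by
  ext i j
  fin_cases i <;> fin_cases j <;> simp [Km]

lemma rhs_eq {n : ℕ} {σ : Matrix (Fin n) (Fin n) ℂ}
    (O ρ' : Matrix (Fin n) (Fin n) ℂ) (θ : ℝ) :
    ((ZA ⊗ₖ O) * Rgadget σ θ * (e00 ⊗ₖ ρ') * (Rgadget σ θ)ᴴ).trace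
      = (1/2 : ℂ) * ((O * Rgate σ θ * ρ' * (Rgate σ (θ + Real.pi))ᴴ).trace
        + (O * Rgate σ (θ + Real.pi) * ρ' * (Rgate σ θ)ᴴ).trace) := by
  rw [gadget_eq]
  simp only [conjTranspose_add, conjTranspose_smul, kron_conjT, Jm_conjT, Km_conjT,
    smul_kronecker, Complex.star_def, map_div₀, _root_.map_one, _root_.map_ofNat,
    Matrix.mul_add, Matrix.add_mul, Matrix.smul_mul, Matrix.mul_smul, trace_add,
    trace_smul, smul_eq_mul, smul_smul, ← mul_kronecker_mul, trace_kronecker]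
  norm_num [ZA, Jm, Km, e00, Matrix.mul_fin_two, Matrix.trace_fin_two]
  ring

lemma hasDeriv_main {n : ℕ} {σ : Matrix (Fin n) (Fin n) ℂ} (hH : σᴴ = σ)
    (O ρ' : Matrix (Fin n) (Fin n) ℂ) (θ : ℝ) :
    HasDerivAt (fun t : ℝ => (O * Rgate σ t * ρ' * (Rgate σ t)ᴴ).trace)
      (((ZA ⊗ₖ O) * Rgadget σ θ * (e00 ⊗ₖ ρ') * (Rgadget σ θ)ᴴ).trace) θ := by
  have h1 : HasDerivAt (fun t : ℝ => t / 2) (1 / 2) θ := (hasDerivAt_id θ).div_const 2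
  have hc : HasDerivAt (fun t : ℝ => ((Real.cos (t / 2) : ℝ) : ℂ))
      ((-Real.sin (θ / 2) * (1 / 2) : ℝ) : ℂ) θ :=
    by have := (Real.hasDerivAt_cos (θ / 2)).comp θ h1; exact HasDerivAt.ofReal_comp this
  have hs : HasDerivAt (fun t : ℝ => ((Real.sin (t / 2) : ℝ) : ℂ))
      ((Real.cos (θ / 2) * (1 / 2) : ℝ) : ℂ) θ :=
    by have := (Real.hasDerivAt_sin (θ / 2)).comp θ h1; exact HasDerivAt.ofReal_comp this
  have hg := ((((hc.mul hc).mul_const ((O * ρ').trace)).add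
      (((hc.mul hs).mul_const ((O * ρ' * σ).trace)).const_mul Complex.I)).sub
      (((hs.mul hc).mul_const ((O * σ * ρ').trace)).const_mul Complex.I)).add
      ((hs.mul hs).mul_const ((O * σ * ρ' * σ).trace))
  have heq : (fun t : ℝ => (O * Rgate σ t * ρ' * (Rgate σ t)ᴴ).trace)
      = fun t : ℝ => ((Real.cos (t / 2) : ℂ) * (Real.cos (t / 2) : ℂ) * (O * ρ').trace
          + Complex.I * ((Real.cos (t / 2) : ℂ) * (Real.sin (t / 2) : ℂ) * (O * ρ' * σ).trace)
          - Complex.I * ((Real.sin (t / 2) : ℂ) * (Real.cos (t / 2) : ℂ) * (O * σ * ρ').trace)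
          + (Real.sin (t / 2) : ℂ) * (Real.sin (t / 2) : ℂ) * (O * σ * ρ' * σ).trace) := by
    funext t
    rw [trace_aux hH O ρ' t t]
    ring
  rw [heq]
  convert hg using 1
  · rfl
  · rfl
  rw [rhs_eq, trace_aux hH O ρ' θ (θ + Real.pi), trace_aux hH O ρ' (θ + Real.pi) θ,
    add_div, Real.cos_add_pi_div_two, Real.sin_add_pi_div_two]
  push_cast
  ring

/-- Soundness of the Case code-transformation rule for unitary branches. -/
theorem case_rule_sound (n : ℕ) (ι : Type) [Fintype ι]
    (M : ι → Matrix (Fin n) (Fin n) ℂ)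
    (σ : ι → Matrix (Fin n) (Fin n) ℂ)
    (hσH : ∀ m, (σ m)ᴴ = σ m) (hσ2 : ∀ m, σ m * σ m = 1)
    (O ρ : Matrix (Fin n) (Fin n) ℂ) (θ : ℝ) :
    deriv (fun t : ℝ =>
        ∑ m : ι, (O * Rgate (σ m) t * M m * ρ * (M m)ᴴ * (Rgate (σ m) t)ᴴ).trace) θ
      = ∑ m : ι, ((ZA ⊗ₖ O) * Rgadget (σ m) θ * (e00 ⊗ₖ (M m * ρ * (M m)ᴴ))
          * (Rgadget (σ m) θ)ᴴ).trace := by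
  have h : HasDerivAt (fun t : ℝ =>
      ∑ m : ι, (O * Rgate (σ m) t * (M m * ρ * (M m)ᴴ) * (Rgate (σ m) t)ᴴ).trace)
      (∑ m : ι, ((ZA ⊗ₖ O) * Rgadget (σ m) θ * (e00 ⊗ₖ (M m * ρ * (M m)ᴴ))
          * (Rgadget (σ m) θ)ᴴ).trace) θ :=
    HasDerivAt.fun_sum fun m _ => hasDeriv_main (hσH m) O (M m * ρ * (M m)ᴴ) θ
  have heq : (fun t : ℝ =>
      ∑ m : ι, (O * Rgate (σ m) t * M m * ρ * (M m)ᴴ * (Rgate (σ m) t)ᴴ).trace)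
      = fun t : ℝ =>
      ∑ m : ι, (O * Rgate (σ m) t * (M m * ρ * (M m)ᴴ) * (Rgate (σ m) t)ᴴ).trace := by
    funext t
    simp [Matrix.mul_assoc]
  rw [heq, h.deriv]
end
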